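/- Let I denote the set of quantum channels T on M_d such that for every ε > 0 there exists a finite list of quantum channels T₁, …, Tₙ with ‖Tᵢ − id‖ ≤ ε for each i and T = T₁ ∘ ⋯ ∘ Tₙ. If T belongs to the closure of I (i.e., T is infinitesimal divisible), then det T is real and det T ≥ 0. -/

import Mathlib

open Matrix
open scoped Kronecker ComplexOrder

noncomputable section

/-- `Mat d` is the space `M_d` of `d × d` complex matrices. -/
abbrev Mat (d : ℕ) := Matrix (Fin d) (Fin d) ℂ

/-- The Choi matrix `C(T) = Σ_{i,j} E_{ij} ⊗ T(E_{ij})` of a linear map on `M_d`. -/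
def choi {d : ℕ} (T : Mat d →ₗ[ℂ] Mat d) :
    Matrix (Fin d × Fin d) (Fin d × Fin d) ℂ :=
  ∑ i : Fin d, ∑ j : Fin d,
    (single i j (1 : ℂ)) ⊗ₖ T (single i j (1 : ℂ))

/-- A linear map on `M_d` is trace-preserving if it preserves the trace. -/
def IsTracePreserving {d : ℕ} (T : Mat d →ₗ[ℂ] Mat d) : Prop :=
  ∀ A : Mat d, (T A).trace = A.trace

/-- A linear map on `M_d` is completely positive if its Choi matrix is positive
semidefinite. -/
def IsCompletelyPositive {d : ℕ} (T : Mat d →ₗ[ℂ] Mat d) : Prop :=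
  (choi T).PosSemidef

/-- A quantum channel is a completely positive trace-preserving linear map. -/
def IsChannel {d : ℕ} (T : Mat d →ₗ[ℂ] Mat d) : Prop :=
  IsTracePreserving T ∧ IsCompletelyPositive T

/- Equip `M_d` with the Frobenius (Hilbert-Schmidt) norm, making the continuous linear
endomorphisms of `M_d` a Banach algebra with the induced operator norm. -/
attribute [local instance] Matrix.frobeniusNormedAddCommGroup Matrix.frobeniusNormedSpace

/-- The set `I` of quantum channels on `M_d` that, for every `ε > 0`, can be written as
a finite composition of quantum channels each within distance `ε` of the identity
(in the operator norm induced by the Frobenius norm on `M_d`). A channel is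
infinitesimal divisible if it lies in the closure of this set. -/
-- basis
def matBasis (d : ℕ) : Module.Basis (Fin d × Fin d) ℂ (Mat d) :=
  Module.Basis.ofEquivFun
    { toFun := fun A p => A p.1 p.2
      map_add' := fun _ _ => rfl
      map_smul' := fun _ _ => rfl
      invFun := fun f => Matrix.of fun i j => f (i, j)
      left_inv := fun _ => rfl
      right_inv := fun _ => rfl }

lemma matBasis_apply {d : ℕ} (p : Fin d × Fin d) :
    matBasis d p = single p.1 p.2 (1 : ℂ) := by
  classical
  ext k l
  simp [matBasis, Module.Basis.coe_ofEquivFun, single, Pi.single_apply,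
    Prod.ext_iff, eq_comm]
  show _ = (Pi.single p (1 : ℂ) : Fin d × Fin d → ℂ) (k, l)
  simp [Pi.single_apply, Prod.ext_iff]

lemma choi_apply {d : ℕ} (T : Mat d →ₗ[ℂ] Mat d) (i k j l : Fin d) :
    choi T (i, k) (j, l) = T (single i j 1) k l := by
  classical
  simp only [choi, Matrix.sum_apply, kroneckerMap_apply]
  rw [Finset.sum_eq_single i, Finset.sum_eq_single j]
  · simp
  · intro b _ hb
    simp [single_apply, hb]
  · simp
  · intro a _ ha
    rw [Finset.sum_eq_zero]
    intro b _
    simp [single_apply, ha]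
  · simp

lemma stdBasisMatrix_conjT {d : ℕ} (i j : Fin d) :
    (single i j (1 : ℂ))ᴴ = single j i 1 := by
  ext k l
  simp [conjTranspose_apply, single, and_comm, apply_ite (star : ℂ → ℂ)]

lemma cp_herm {d : ℕ} {T : Mat d →ₗ[ℂ] Mat d} (hT : IsCompletelyPositive T)
    (A : Mat d) : T Aᴴ = (T A)ᴴ := by
  classical
  have hH : (choi T)ᴴ = choi T := hT.1
  have key : ∀ i j : Fin d, T (single j i 1) = (T (single i j 1))ᴴ := by
    intro i j
    ext l k
    have h1 : (choi T)ᴴ (j, l) (i, k) = choi T (j, l) (i, k) := by rw [hH]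
    rw [conjTranspose_apply, choi_apply, choi_apply] at h1
    rw [conjTranspose_apply]
    exact h1.symm
  have hdec : ∀ B : Mat d, B = ∑ i, ∑ j, B i j • single i j (1 : ℂ) := by
    intro B
    conv_lhs => rw [matrix_eq_sum_single B]
    refine Finset.sum_congr rfl fun i _ => Finset.sum_congr rfl fun j _ => ?_
    rw [smul_single, smul_eq_mul, mul_one]
  have hAH : Aᴴ = ∑ i, ∑ j, star (A i j) • single j i (1 : ℂ) := by
    conv_lhs => rw [hdec A]
    rw [conjTranspose_sum]
    refine Finset.sum_congr rfl fun i _ => ?_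
    rw [conjTranspose_sum]
    refine Finset.sum_congr rfl fun j _ => ?_
    rw [conjTranspose_smul, stdBasisMatrix_conjT]
  calc T Aᴴ = ∑ i, ∑ j, star (A i j) • (T (single i j 1))ᴴ := by
        rw [hAH, map_sum]
        refine Finset.sum_congr rfl fun i _ => ?_
        rw [map_sum]
        refine Finset.sum_congr rfl fun j _ => ?_
        rw [_root_.map_smul, key]
    _ = (∑ i, ∑ j, (A i j) • T (single i j 1))ᴴ := by
        simp only [conjTranspose_sum, conjTranspose_smul, star_star]
    _ = (T A)ᴴ := by
        congr 1
        conv_rhs => rw [hdec A]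
        simp only [map_sum, _root_.map_smul]

lemma det_real_of_herm {d : ℕ} {T : Mat d →ₗ[ℂ] Mat d}
    (hT : ∀ A : Mat d, T Aᴴ = (T A)ᴴ) :
    (starRingEnd ℂ) (LinearMap.det T) = LinearMap.det T := by
  classical
  set b := matBasis d with hb
  set M := LinearMap.toMatrix b b T with hM
  have hdet : LinearMap.det T = M.det := (LinearMap.det_toMatrix b T).symm
  have hMe : ∀ p q : Fin d × Fin d, M p q = T (single q.1 q.2 1) p.1 p.2 := by
    intro p q
    rw [hM, LinearMap.toMatrix_apply, matBasis_apply]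
    rfl
  have hswap : (M.map (starRingEnd ℂ)).submatrix (Equiv.prodComm (Fin d) (Fin d))
      (Equiv.prodComm (Fin d) (Fin d)) = M := by
    ext ⟨k, l⟩ ⟨i, j⟩
    rw [submatrix_apply, map_apply, hMe, hMe]
    show star (T (single j i 1) l k) = T (single i j 1) k l
    rw [show single i j (1 : ℂ) = (single j i 1)ᴴ from
      (stdBasisMatrix_conjT j i).symm, hT, conjTranspose_apply]
  have hstar : (starRingEnd ℂ) M.det = M.det := by
    conv_rhs => rw [← hswap]
    rw [Matrix.det_submatrix_equiv_self]
    exact RingHom.map_det (starRingEnd ℂ) M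
  rw [hdet]; exact hstar

lemma det_clm_prod {d : ℕ} (L : List (Mat d →L[ℂ] Mat d)) :
    LinearMap.det ((L.prod : Mat d →L[ℂ] Mat d) : Mat d →ₗ[ℂ] Mat d)
      = (L.map fun S : Mat d →L[ℂ] Mat d =>
          LinearMap.det ((S : Mat d →L[ℂ] Mat d) : Mat d →ₗ[ℂ] Mat d)).prod := by
  induction L with
  | nil =>
    rw [List.prod_nil, List.map_nil, List.prod_nil, ContinuousLinearMap.one_def,
      ContinuousLinearMap.coe_id, LinearMap.det_id]
  | cons a l ih =>
    rw [List.prod_cons, List.map_cons, List.prod_cons, ← ih,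
      ContinuousLinearMap.mul_def, ContinuousLinearMap.toLinearMap_comp, LinearMap.det_comp]


def InfDivSet (d : ℕ) : Set (Mat d →L[ℂ] Mat d) :=
  {T | ∀ ε : ℝ, 0 < ε → ∃ (n : ℕ) (Ts : Fin n → (Mat d →L[ℂ] Mat d)),
    (∀ i : Fin n, IsChannel ((Ts i : Mat d →L[ℂ] Mat d) : Mat d →ₗ[ℂ] Mat d) ∧
      @Norm.norm (Mat d →L[ℂ] Mat d) ContinuousLinearMap.hasOpNorm (Ts i - 1) ≤ ε) ∧
    IsChannel (T : Mat d →ₗ[ℂ] Mat d) ∧ T = (List.ofFn Ts).prod}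

/-- an infinitesimal divisible channel (an element of the closure of the
set `I`) has real nonnegative determinant. -/
theorem infDiv_det_nonneg {d : ℕ} (T : Mat d →L[ℂ] Mat d)
    (hT : T ∈ closure (InfDivSet d)) :
    ∃ r : ℝ, LinearMap.det (T : Mat d →ₗ[ℂ] Mat d) = (r : ℂ) ∧ 0 ≤ r := by
  classical
  have hcont : Continuous fun S : Mat d →L[ℂ] Mat d =>
      LinearMap.det (S : Mat d →ₗ[ℂ] Mat d) := ContinuousLinearMap.continuous_det
  set C : Set (Mat d →L[ℂ] Mat d) :=
    (fun S : Mat d →L[ℂ] Mat d => LinearMap.det (S : Mat d →ₗ[ℂ] Mat d)) ⁻¹'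
      {z : ℂ | z.im = 0 ∧ 0 ≤ z.re} with hCdef
  have hCclosed : IsClosed C :=
    ((isClosed_eq Complex.continuous_im continuous_const).inter
      (isClosed_le continuous_const Complex.continuous_re)).preimage hcont
  have hdet1 : LinearMap.det ((1 : Mat d →L[ℂ] Mat d) : Mat d →ₗ[ℂ] Mat d) = 1 := by
    rw [ContinuousLinearMap.one_def, ContinuousLinearMap.coe_id, LinearMap.det_id]
  have hsub : InfDivSet d ⊆ C := by
    intro S hS
    letI : NormedAddCommGroup (Mat d →L[ℂ] Mat d) := ContinuousLinearMap.toNormedAddCommGroup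
    obtain ⟨δ, hδpos, hδ⟩ :=
      Metric.continuousAt_iff.mp (hcont.continuousAt (x := 1)) 1 one_pos
    obtain ⟨n, Ts, hTs, _, hprod⟩ := hS (δ / 2) (by positivity)
    have hre : ∀ i : Fin n, ∃ r : ℝ, 0 < r ∧
        LinearMap.det ((Ts i : Mat d →L[ℂ] Mat d) : Mat d →ₗ[ℂ] Mat d) = (r : ℂ) := by
      intro i
      obtain ⟨⟨_, hcp⟩, hnorm⟩ := hTs i
      have hrl := det_real_of_herm (fun A => cp_herm hcp A)
      set z := LinearMap.det ((Ts i : Mat d →L[ℂ] Mat d) : Mat d →ₗ[ℂ] Mat d) with hz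
      have him : z.im = 0 := Complex.conj_eq_iff_im.mp hrl
      have h2 : z = (z.re : ℂ) := Complex.ext (by simp) (by simp [him])
      have hdist : dist (Ts i) 1 < δ := by
        rw [dist_eq_norm]
        calc ‖Ts i - 1‖ ≤ δ / 2 := hnorm
          _ < δ := by linarith
      have hd1 := hδ hdist
      rw [hdet1, ← hz] at hd1
      have hz1 : dist z.re (1 : ℝ) < 1 := by
        rw [h2, show (1 : ℂ) = ((1 : ℝ) : ℂ) by norm_num, Complex.isometry_ofReal.dist_eq] at hd1
        exact hd1
      rw [Real.dist_eq] at hz1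
      have := abs_lt.mp hz1
      exact ⟨z.re, by linarith [this.1], h2⟩
    choose r hrpos hrdet using hre
    have hdetS : LinearMap.det (S : Mat d →ₗ[ℂ] Mat d) = ((∏ i, r i : ℝ) : ℂ) := by
      rw [hprod, det_clm_prod, List.map_ofFn, List.prod_ofFn]
      simp only [Complex.ofReal_prod, Function.comp]
      exact Finset.prod_congr rfl fun i _ => hrdet i
    show (LinearMap.det (S : Mat d →ₗ[ℂ] Mat d)).im = 0 ∧
      0 ≤ (LinearMap.det (S : Mat d →ₗ[ℂ] Mat d)).re
    rw [hdetS]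
    refine ⟨Complex.ofReal_im _, ?_⟩
    rw [Complex.ofReal_re]
    exact Finset.prod_nonneg fun i _ => (hrpos i).le
  have hTC : T ∈ C := closure_minimal hsub hCclosed hT
  obtain ⟨him, hre⟩ := hTC
  exact ⟨(LinearMap.det (T : Mat d →ₗ[ℂ] Mat d)).re,
    Complex.ext (by simp) (by simp [him]), hre⟩
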